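/- Let k be an algebraically closed field of characteristic p > 3, and W(1) = Der_k(k[X]/(X^p)). Then b = k·∂ + k·x∂ is a maximal solvable Lie subalgebra of W(1): b is solvable, and any solvable Lie subalgebra of W(1) containing b equals b. -/

import Mathlib

open Polynomial

set_option synthInstance.maxHeartbeats 1000000
set_option maxHeartbeats 1000000

/-- The truncated polynomial algebra `A(1) = k[X]/(X^p)`. -/
noncomputable abbrev TruncPolyAlg (k : Type*) [Field k] (p : ℕ) :=
  Polynomial k ⧸ Ideal.span {(X : Polynomial k) ^ p}

/-- The image of `X` in `A(1) = k[X]/(X^p)`. -/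
noncomputable abbrev truncX (k : Type*) [Field k] (p : ℕ) : TruncPolyAlg k p :=
  Ideal.Quotient.mk _ (X : Polynomial k)

/-- The standard basis `1, x, ..., x^(p-1)` of `k[X]/(X^p)`. -/
noncomputable def tBasis (k : Type*) [Field k] (p : ℕ) : Module.Basis (Fin p) k (TruncPolyAlg k p) :=
  ((AdjoinRoot.powerBasis' (Polynomial.monic_X_pow (R := k) p)).basis).reindex
    (finCongr (by simp))

lemma tBasis_apply {k : Type*} [Field k] {p : ℕ} (i : Fin p) :
    tBasis k p i = truncX k p ^ (i : ℕ) := by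
  rw [tBasis]
  erw [Module.Basis.reindex_apply, PowerBasis.basis_eq_pow]
  simp only [AdjoinRoot.powerBasis'_gen, finCongr_symm, finCongr_apply, Fin.coe_cast]
  rfl

section Aux

variable {k : Type*} [Field k] {p : ℕ}

lemma adjoin_truncX : Algebra.adjoin k {truncX k p} = ⊤ := by
  have hsurj : Function.Surjective (Ideal.Quotient.mkₐ k (Ideal.span {(X : Polynomial k) ^ p})) :=
    Ideal.Quotient.mkₐ_surjective k _
  have : Algebra.adjoin k
      ((Ideal.Quotient.mkₐ k (Ideal.span {(X : Polynomial k) ^ p})) '' {X}) = ⊤ := by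
    rw [← AlgHom.map_adjoin, Polynomial.adjoin_X, Algebra.map_top]
    exact (AlgHom.range_eq_top _).mpr hsurj
  simpa using this

lemma dext {D E : Derivation k (TruncPolyAlg k p) (TruncPolyAlg k p)}
    (h : D (truncX k p) = E (truncX k p)) : D = E :=
  Derivation.ext_of_adjoin_eq_top {truncX k p} adjoin_truncX (by simpa [Set.EqOn] using h)

lemma repr_pow' (m : ℕ) (hm : m < p) :
    (tBasis k p).repr (truncX k p ^ m) = Finsupp.single (⟨m, hm⟩ : Fin p) 1 := by
  rw [← tBasis_apply ⟨m, hm⟩, Module.Basis.repr_self]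

lemma trunc_one_ne_zero (hp : 0 < p) : (1 : TruncPolyAlg k p) ≠ 0 := by
  have h := (tBasis k p).ne_zero ⟨0, hp⟩
  rwa [tBasis_apply, pow_zero] at h

variable (D0 D1 : Derivation k (TruncPolyAlg k p) (TruncPolyAlg k p))

lemma D0_pow (hD0 : D0 (truncX k p) = 1) (n : ℕ) :
    D0 (truncX k p ^ n) = (n : k) • truncX k p ^ (n - 1) := by
  rw [Derivation.leibniz_pow, hD0, Nat.cast_smul_eq_nsmul]
  simp

lemma D1_eq (hD0 : D0 (truncX k p) = 1) (hD1 : D1 (truncX k p) = truncX k p) :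
    D1 = truncX k p • D0 := by
  apply dext
  rw [hD1, Derivation.smul_apply, hD0, smul_eq_mul, mul_one]

lemma lie01 (hD0 : D0 (truncX k p) = 1) (hD1 : D1 (truncX k p) = truncX k p) :
    ⁅D0, D1⁆ = D0 := by
  apply dext
  rw [Derivation.commutator_apply, hD0, hD1, hD0, Derivation.map_one_eq_zero, sub_zero]

lemma lie_e (hD0 : D0 (truncX k p) = 1) (n : ℕ) :
    ⁅D0, truncX k p ^ n • D0⁆ = (n : k) • (truncX k p ^ (n - 1) • D0) := by
  apply dext
  simp [Derivation.commutator_apply, Derivation.smul_apply, hD0, D0_pow D0 hD0,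
    Derivation.map_one_eq_zero, smul_eq_mul, mul_one]

lemma lie12 (hD0 : D0 (truncX k p) = 1) (hD1 : D1 (truncX k p) = truncX k p) :
    ⁅D1, truncX k p ^ 2 • D0⁆ = truncX k p ^ 2 • D0 := by
  apply dext
  rw [D1_eq D0 D1 hD0 hD1]
  simp [Derivation.commutator_apply, Derivation.smul_apply, hD0, D0_pow D0 hD0,
    smul_eq_mul, mul_one]
  ring

lemma lie02 (hD0 : D0 (truncX k p) = 1) (hD1 : D1 (truncX k p) = truncX k p) :
    ⁅D0, truncX k p ^ 2 • D0⁆ = (2 : k) • D1 := by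
  rw [lie_e D0 hD0 2, D1_eq D0 D1 hD0 hD1]
  norm_num

lemma repr_D0 (hD0 : D0 (truncX k p) = 1) (f : TruncPolyAlg k p) (j : Fin p) :
    (tBasis k p).repr (D0 f) j =
      if h : (j : ℕ) + 1 < p then
        (((j : ℕ) + 1 : ℕ) : k) * (tBasis k p).repr f ⟨(j : ℕ) + 1, h⟩
      else 0 := by
  have hsum : D0 f = ∑ i : Fin p,
      (tBasis k p).repr f i • (((i : ℕ) : k) • truncX k p ^ ((i : ℕ) - 1)) := by
    conv_lhs => rw [← Module.Basis.sum_repr (tBasis k p) f]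
    rw [map_sum]
    refine Finset.sum_congr rfl fun i _ => ?_
    rw [Derivation.map_smul, tBasis_apply, D0_pow D0 hD0]
  have hlt : ∀ i : Fin p, (i : ℕ) - 1 < p := fun i => lt_of_le_of_lt (Nat.sub_le _ _) i.isLt
  rw [hsum, map_sum]
  have hterm : ∀ i : Fin p,
      ((tBasis k p).repr ((tBasis k p).repr f i • (((i : ℕ) : k) • truncX k p ^ ((i : ℕ) - 1)))) j
      = (tBasis k p).repr f i * (((i : ℕ) : k) *
          (if (⟨(i : ℕ) - 1, hlt i⟩ : Fin p) = j then (1:k) else 0)) := by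
    intro i
    simp only [map_smul, Finsupp.smul_apply, repr_pow' _ (hlt i), Finsupp.single_apply,
      smul_eq_mul]
  rw [Finsupp.finset_sum_apply]
  simp only [hterm]
  by_cases h : (j : ℕ) + 1 < p
  · rw [dif_pos h]
    rw [Finset.sum_eq_single (⟨(j : ℕ) + 1, h⟩ : Fin p)]
    · rw [if_pos (by rw [Fin.ext_iff]; simp)]
      push_cast
      ring
    · intro i _ hne
      rcases Nat.eq_zero_or_pos (i : ℕ) with h0 | h0
      · simp [h0]
      · rw [if_neg, mul_zero, mul_zero]
        intro hcon
        apply hne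
        rw [Fin.ext_iff] at hcon ⊢
        simp only [Fin.val_mk] at hcon ⊢
        omega
    · intro hcon
      exact absurd (Finset.mem_univ _) hcon
  · rw [dif_neg h]
    apply Finset.sum_eq_zero
    intro i _
    rcases Nat.eq_zero_or_pos (i : ℕ) with h0 | h0
    · simp [h0]
    · rw [if_neg, mul_zero, mul_zero]
      intro hcon
      rw [Fin.ext_iff] at hcon
      simp only [Fin.val_mk] at hcon
      have := i.isLt
      omega

lemma repr3 (hp : 3 < p) (f : TruncPolyAlg k p)
    (h : ∀ i : Fin p, 2 < (i : ℕ) → (tBasis k p).repr f i = 0) :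
    f = (tBasis k p).repr f ⟨0, by omega⟩ • truncX k p ^ 0
        + (tBasis k p).repr f ⟨1, by omega⟩ • truncX k p ^ 1
        + (tBasis k p).repr f ⟨2, by omega⟩ • truncX k p ^ 2 := by
  apply (tBasis k p).repr.injective
  ext j
  rw [map_add, map_add, map_smul, map_smul, map_smul,
    repr_pow' 0 (by omega), repr_pow' 1 (by omega), repr_pow' 2 (by omega)]
  simp only [Finsupp.coe_add, Pi.add_apply, Finsupp.smul_apply, Finsupp.single_apply,
    smul_eq_mul]
  rcases lt_or_ge (j : ℕ) 3 with hj | hj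
  · obtain ⟨jv, hjp⟩ := j
    simp only [Fin.val_mk] at hj
    interval_cases jv <;> simp [Fin.ext_iff]
  · rw [h j (by omega), if_neg (by rw [Fin.ext_iff]; simp only [Fin.val_mk]; omega),
      if_neg (by rw [Fin.ext_iff]; simp only [Fin.val_mk]; omega),
      if_neg (by rw [Fin.ext_iff]; simp only [Fin.val_mk]; omega)]
    ring

lemma repr2 (hp : 3 < p) (f : TruncPolyAlg k p)
    (h : ∀ i : Fin p, 1 < (i : ℕ) → (tBasis k p).repr f i = 0) :
    f = (tBasis k p).repr f ⟨0, by omega⟩ • truncX k p ^ 0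
        + (tBasis k p).repr f ⟨1, by omega⟩ • truncX k p ^ 1 := by
  apply (tBasis k p).repr.injective
  ext j
  rw [map_add, map_smul, map_smul, repr_pow' 0 (by omega), repr_pow' 1 (by omega)]
  simp only [Finsupp.coe_add, Pi.add_apply, Finsupp.smul_apply, Finsupp.single_apply,
    smul_eq_mul]
  rcases lt_or_ge (j : ℕ) 2 with hj | hj
  · obtain ⟨jv, hjp⟩ := j
    simp only [Fin.val_mk] at hj
    interval_cases jv <;> simp [Fin.ext_iff]
  · rw [h j (by omega), if_neg (by rw [Fin.ext_iff]; simp only [Fin.val_mk]; omega),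
      if_neg (by rw [Fin.ext_iff]; simp only [Fin.val_mk]; omega)]
    ring

lemma lieD0D0 (s t : k) : ⁅s • D0, t • D0⁆ = (0 : Derivation k (TruncPolyAlg k p)
    (TruncPolyAlg k p)) := by
  apply dext
  simp only [Derivation.commutator_apply, Derivation.smul_apply, Derivation.map_smul,
    Derivation.zero_apply, smul_smul, mul_comm]
  rw [sub_self]

lemma eqD01 (hD0 : D0 (truncX k p) = 1) (hD1 : D1 (truncX k p) = truncX k p)
    (D : Derivation k (TruncPolyAlg k p) (TruncPolyAlg k p)) (a b : k)
    (hf : D (truncX k p) = a • truncX k p ^ 0 + b • truncX k p ^ 1) :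
    D = a • D0 + b • D1 := by
  apply dext
  rw [hf]
  simp only [Derivation.add_apply, Derivation.smul_apply, hD0, hD1, pow_zero, pow_one]

lemma subD (hD0 : D0 (truncX k p) = 1) (hD1 : D1 (truncX k p) = truncX k p)
    (D : Derivation k (TruncPolyAlg k p) (TruncPolyAlg k p)) (a b c : k)
    (hf : D (truncX k p) = a • truncX k p ^ 0 + b • truncX k p ^ 1 + c • truncX k p ^ 2) :
    D - a • D0 - b • D1 = c • (truncX k p ^ 2 • D0) := by
  apply dext
  rw [Derivation.sub_apply, Derivation.sub_apply, hf]
  simp only [Derivation.smul_apply, hD0, hD1, pow_zero, pow_one, smul_eq_mul, mul_one]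
  module

/-- Key descent lemma: if a Lie subalgebra contains `∂` and `x∂` and an element whose
`x`-value has top coefficient in degree `m+2`, then it contains `x²∂`. -/
lemma key [Fact p.Prime] [CharP k p] (hp : 3 < p)
    (hD0 : D0 (truncX k p) = 1) (hD1 : D1 (truncX k p) = truncX k p)
    (C : LieSubalgebra k (Derivation k (TruncPolyAlg k p) (TruncPolyAlg k p)))
    (h0 : D0 ∈ C) (h1 : D1 ∈ C) :
    ∀ m : ℕ, ∀ D ∈ C, ∀ hm : m + 2 < p,
      (∀ i : Fin p, m + 2 < (i : ℕ) → (tBasis k p).repr (D (truncX k p)) i = 0) →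
      (tBasis k p).repr (D (truncX k p)) ⟨m + 2, hm⟩ ≠ 0 →
      truncX k p ^ 2 • D0 ∈ C := by
  intro m
  induction m with
  | zero =>
    intro D hD hm hvan hne
    have hne' : (tBasis k p).repr (D (truncX k p)) ⟨2, by omega⟩ ≠ 0 := hne
    have hf := repr3 hp (D (truncX k p)) (fun i hi => hvan i (by omega))
    have hEC : D - (tBasis k p).repr (D (truncX k p)) ⟨0, by omega⟩ • D0
        - (tBasis k p).repr (D (truncX k p)) ⟨1, by omega⟩ • D1 ∈ C :=
      C.sub_mem (C.sub_mem hD (C.smul_mem _ h0)) (C.smul_mem _ h1)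
    have hE := subD D0 D1 hD0 hD1 D _ _ _ hf
    have heq : truncX k p ^ 2 • D0
        = ((tBasis k p).repr (D (truncX k p)) ⟨2, by omega⟩)⁻¹
            • (D - (tBasis k p).repr (D (truncX k p)) ⟨0, by omega⟩ • D0
                - (tBasis k p).repr (D (truncX k p)) ⟨1, by omega⟩ • D1) := by
      rw [hE, smul_smul, inv_mul_cancel₀ hne', one_smul]
    rw [heq]
    exact C.smul_mem _ hEC
  | succ n ih =>
    intro D hD hm hvan hne
    have hEC : ⁅D0, D⁆ ∈ C := C.lie_mem h0 hD
    have hEx : ⁅D0, D⁆ (truncX k p) = D0 (D (truncX k p)) := by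
      rw [Derivation.commutator_apply, hD0, Derivation.map_one_eq_zero, sub_zero]
    refine ih ⁅D0, D⁆ hEC (by omega) ?_ ?_
    · intro i hi
      rw [hEx, repr_D0 D0 hD0]
      split
      · next h =>
          exact mul_eq_zero_of_right _ (hvan ⟨(i : ℕ) + 1, h⟩ (by simp only [Fin.val_mk]; omega))
      · rfl
    · rw [hEx, repr_D0 D0 hD0, dif_pos (show ((⟨n + 2, by omega⟩ : Fin p) : ℕ) + 1 < p by
        simp only [Fin.val_mk]; omega)]
      refine mul_ne_zero ?_ ?_
      · intro hc
        simp only [Fin.val_mk] at hc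
        rw [CharP.cast_eq_zero_iff k p] at hc
        have := Nat.le_of_dvd (by omega) hc
        omega
      · have hidx : (⟨((⟨n + 2, by omega⟩ : Fin p) : ℕ) + 1, by simp only [Fin.val_mk]; omega⟩
            : Fin p) = ⟨n + 1 + 2, hm⟩ := by
          first
          | rfl
          | (rw [Fin.ext_iff]; simp only [Fin.val_mk]; omega)
        rw [hidx]
        exact hne

end Aux

/-- for `k` algebraically closed of characteristic `p > 3`,
`b = k·∂ + k·x∂` is a maximal solvable Lie subalgebra of
`W(1) = Der_k(k[X]/(X^p))`: it is a solvable Lie subalgebra and every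
solvable Lie subalgebra containing it equals it. -/
theorem witt_del_xdel_maximal_solvable
    {p : ℕ} [Fact p.Prime] (hp : 3 < p)
    {k : Type*} [Field k] [IsAlgClosed k] [CharP k p]
    (D0 D1 : Derivation k (TruncPolyAlg k p) (TruncPolyAlg k p))
    (hD0 : D0 (truncX k p) = 1)
    (hD1 : D1 (truncX k p) = truncX k p) :
    ∃ B : LieSubalgebra k (Derivation k (TruncPolyAlg k p) (TruncPolyAlg k p)),
      B.toSubmodule = Submodule.span k {D0, D1} ∧ LieAlgebra.IsSolvable B ∧
      ∀ C : LieSubalgebra k (Derivation k (TruncPolyAlg k p) (TruncPolyAlg k p)),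
        LieAlgebra.IsSolvable C → B ≤ C → C = B := by
  classical
  -- brackets of elements of the span land in the span of D0
  have hbr : ∀ E F : Derivation k (TruncPolyAlg k p) (TruncPolyAlg k p),
      E ∈ Submodule.span k {D0, D1} → F ∈ Submodule.span k {D0, D1} →
      ⁅E, F⁆ ∈ Submodule.span k {D0} := by
    intro E F hE hF
    obtain ⟨a, b, rfl⟩ := Submodule.mem_span_pair.mp hE
    obtain ⟨c, d, rfl⟩ := Submodule.mem_span_pair.mp hF
    have hcalc : ⁅a • D0 + b • D1, c • D0 + d • D1⁆ = (a * d - b * c) • D0 := by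
      apply dext
      rw [Derivation.commutator_apply]
      simp only [Derivation.add_apply, Derivation.smul_apply, hD0, hD1, map_add,
        Derivation.map_smul, Derivation.map_one_eq_zero, smul_zero, zero_add, add_zero,
        smul_eq_mul, mul_one]
      module
    rw [hcalc]
    exact Submodule.smul_mem _ _ (Submodule.mem_span_singleton_self _)
  have hspanle : Submodule.span k {D0} ≤ Submodule.span k {D0, D1} :=
    Submodule.span_mono (by simp)
  set B : LieSubalgebra k (Derivation k (TruncPolyAlg k p) (TruncPolyAlg k p)) :=
    { toSubmodule := Submodule.span k {D0, D1},
      lie_mem' := fun {E F} hE hF => hspanle (hbr E F hE hF) } with hBdef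
  have hD0B : D0 ∈ B := Submodule.subset_span (Set.mem_insert _ _)
  have hD1B : D1 ∈ B := Submodule.subset_span (by simp)
  refine ⟨B, rfl, ?_, ?_⟩
  · -- solvability of B
    have hsub : ∀ z : ↥B, z ∈ LieAlgebra.derivedSeries k (↥B) 1 →
        (z : Derivation k (TruncPolyAlg k p) (TruncPolyAlg k p)) ∈ Submodule.span k {D0} := by
      intro z hz
      rw [LieAlgebra.derivedSeries_def, LieAlgebra.derivedSeriesOfIdeal_succ,
        LieAlgebra.derivedSeriesOfIdeal_zero] at hz
      rw [← LieSubmodule.mem_toSubmodule, LieSubmodule.lieIdeal_oper_eq_linear_span'] at hz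
      refine Submodule.span_induction ?_ ?_ ?_ ?_ hz
      · rintro w ⟨u, -, v, -, rfl⟩
        rw [LieSubalgebra.coe_bracket]
        exact hbr _ _ u.2 v.2
      · simp
      · intro u v _ _ hu hv
        rw [Submodule.coe_add]
        exact Submodule.add_mem _ hu hv
      · intro t u _ hu
        rw [Submodule.coe_smul]
        exact Submodule.smul_mem _ _ hu
    rw [LieAlgebra.isSolvable_iff k]
    refine ⟨2, ?_⟩
    rw [show (2 : ℕ) = 1 + 1 from rfl, LieAlgebra.derivedSeries_def,
      LieAlgebra.derivedSeriesOfIdeal_succ, LieSubmodule.lie_eq_bot_iff]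
    intro u hu v hv
    obtain ⟨s, hs⟩ := Submodule.mem_span_singleton.mp (hsub u hu)
    obtain ⟨t, ht⟩ := Submodule.mem_span_singleton.mp (hsub v hv)
    apply Subtype.ext
    rw [LieSubalgebra.coe_bracket, ← hs, ← ht, lieD0D0 D0]
    rfl
  · -- maximality
    intro C hCsolv hBC
    have hD0C : D0 ∈ C := hBC hD0B
    have hD1C : D1 ∈ C := hBC hD1B
    refine le_antisymm ?_ hBC
    intro D hD
    by_contra hDB
    -- Step 1: D has a nonzero coefficient in degree ≥ 2.
    have hex : ∃ i : Fin p, 2 ≤ (i : ℕ) ∧ (tBasis k p).repr (D (truncX k p)) i ≠ 0 := by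
      by_contra hno
      push_neg at hno
      apply hDB
      have hf := repr2 hp (D (truncX k p)) (fun i hi => hno i (by omega))
      have hD' := eqD01 D0 D1 hD0 hD1 D _ _ hf
      show D ∈ Submodule.span k {D0, D1}
      exact Submodule.mem_span_pair.mpr ⟨_, _, hD'.symm⟩
    -- Step 2: extract the top nonzero coefficient of degree ≥ 2.
    obtain ⟨i0, hi0⟩ := hex
    set S : Finset (Fin p) := Finset.univ.filter
      (fun i => 2 ≤ (i : ℕ) ∧ (tBasis k p).repr (D (truncX k p)) i ≠ 0) with hSdef
    have hS : S.Nonempty := ⟨i0, Finset.mem_filter.mpr ⟨Finset.mem_univ _, hi0⟩⟩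
    set a := S.max' hS with ha
    have haS := Finset.mem_filter.mp (S.max'_mem hS)
    have ha2 : 2 ≤ (a : ℕ) := haS.2.1
    have hane : (tBasis k p).repr (D (truncX k p)) a ≠ 0 := haS.2.2
    have hap : (a : ℕ) < p := a.isLt
    have hmax : ∀ i : Fin p, (a : ℕ) < (i : ℕ) → (tBasis k p).repr (D (truncX k p)) i = 0 := by
      intro i hi
      by_contra hcon
      have hiS : i ∈ S := Finset.mem_filter.mpr ⟨Finset.mem_univ _, by omega, hcon⟩
      have := S.le_max' i hiS
      rw [← ha] at this
      rw [Fin.le_def] at this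
      omega
    -- Step 3: the subalgebra C contains x²∂.
    have h2C : truncX k p ^ 2 • D0 ∈ C := by
      refine key D0 D1 hp hD0 hD1 C hD0C hD1C ((a : ℕ) - 2) D hD (by omega) ?_ ?_
      · intro i hi
        exact hmax i (by omega)
      · have hidx : (⟨(a : ℕ) - 2 + 2, by omega⟩ : Fin p) = a := by
          rw [Fin.ext_iff]; simp only [Fin.val_mk]; omega
        rw [hidx]
        exact hane
    -- Step 4: contradiction with solvability via the copy of sl₂.
    have hlie01 := lie01 D0 D1 hD0 hD1
    have hlie12 := lie12 D0 D1 hD0 hD1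
    have hlie02 := lie02 D0 D1 hD0 hD1
    have h2k : (2 : k) ≠ 0 := by
      intro hc
      have h2 : ((2 : ℕ) : k) = 0 := by push_cast; exact hc
      rw [CharP.cast_eq_zero_iff k p] at h2
      have := Nat.le_of_dvd (by omega) h2
      omega
    have hall : ∀ n : ℕ, (⟨D0, hD0C⟩ : C) ∈ LieAlgebra.derivedSeries k (↥C) n ∧
        (⟨D1, hD1C⟩ : C) ∈ LieAlgebra.derivedSeries k (↥C) n ∧
        (⟨truncX k p ^ 2 • D0, h2C⟩ : C) ∈ LieAlgebra.derivedSeries k (↥C) n := by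
      intro n
      induction n with
      | zero => exact ⟨LieSubmodule.mem_top _, LieSubmodule.mem_top _, LieSubmodule.mem_top _⟩
      | succ n ih =>
        obtain ⟨i0', i1', i2'⟩ := ih
        rw [LieAlgebra.derivedSeries_def, LieAlgebra.derivedSeriesOfIdeal_succ]
        refine ⟨?_, ?_, ?_⟩
        · have h := LieSubmodule.lie_mem_lie i0' i1'
          have heq : ⁅(⟨D0, hD0C⟩ : C), (⟨D1, hD1C⟩ : C)⁆ = (⟨D0, hD0C⟩ : C) := by
            apply Subtype.ext
            rw [LieSubalgebra.coe_bracket]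
            exact hlie01
          rwa [heq] at h
        · have h := LieSubmodule.lie_mem_lie i0' i2'
          have h' := SMulMemClass.smul_mem (S := LieSubmodule k (↥C) (↥C)) ((2 : k)⁻¹) h
          have heq : (2 : k)⁻¹ • ⁅(⟨D0, hD0C⟩ : C), (⟨truncX k p ^ 2 • D0, h2C⟩ : C)⁆
              = (⟨D1, hD1C⟩ : C) := by
            apply Subtype.ext
            show (2 : k)⁻¹ • ⁅D0, truncX k p ^ 2 • D0⁆ = D1
            rw [hlie02, smul_smul, inv_mul_cancel₀ h2k, one_smul]
          rwa [heq] at h'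
        · have h := LieSubmodule.lie_mem_lie i1' i2'
          have heq : ⁅(⟨D1, hD1C⟩ : C), (⟨truncX k p ^ 2 • D0, h2C⟩ : C)⁆
              = (⟨truncX k p ^ 2 • D0, h2C⟩ : C) := by
            apply Subtype.ext
            rw [LieSubalgebra.coe_bracket]
            exact hlie12
          rwa [heq] at h
    obtain ⟨N, hN⟩ := (LieAlgebra.isSolvable_iff k (↥C)).mp hCsolv
    obtain ⟨hbot, -, -⟩ := hall N
    rw [hN, LieSubmodule.mem_bot] at hbot
    have hD00 : D0 = 0 := congrArg Subtype.val hbot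
    rw [hD00, Derivation.zero_apply] at hD0
    exact trunc_one_ne_zero (p := p) (by omega) hD0.symm
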